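/- If U ∈ F_p^{ℤ×ℤ} is [−p,−p]-automatic, then there is a constant K such that the number of distinct m×n rectangular subwords of U is at most K·max{m,n}^{10} for all m,n ≥ 1. -/

import Mathlib

namespace NNAux
variable (p : ℕ)

def dig (x i : ℕ) : ℕ := x / p ^ i % p

def digList (k x y : ℕ) : List (ℕ × ℕ) :=
  (List.range k).map fun i => (dig p x i, dig p y i)

def nlen (x : ℕ) : ℕ := if x = 0 then 0 else Nat.log p x + 1

lemma sum_dig (k x : ℕ) : (∑ i ∈ Finset.range k, dig p x i * p ^ i) = x % p ^ k := by
  induction k with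
  | zero => simp [Nat.mod_one]
  | succ k ih =>
    rw [Finset.sum_range_succ, ih, Nat.mod_pow_succ, dig]
    ring

lemma dig_lt (hp : 1 < p) (x i : ℕ) : dig p x i < p := Nat.mod_lt _ (by omega)

lemma lt_pow_nlen (hp : 1 < p) (x : ℕ) : x < p ^ nlen p x := by
  unfold nlen
  split
  · simpa
  · exact Nat.lt_pow_succ_log_self hp x

lemma dig_nlen_ne (hp : 1 < p) {x : ℕ} (hx : x ≠ 0) : dig p x (nlen p x - 1) ≠ 0 := by
  unfold nlen dig
  rw [if_neg hx]
  simp only [Nat.add_sub_cancel]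
  have h1 : 1 ≤ x / p ^ Nat.log p x :=
    (Nat.one_le_div_iff (Nat.pow_pos (by omega))).2 (Nat.pow_log_le_self p hx)
  have h2 : x / p ^ Nat.log p x < p := by
    rw [Nat.div_lt_iff_lt_mul (Nat.pow_pos (by omega)), ← pow_succ']
    exact Nat.lt_pow_succ_log_self hp x
  rw [Nat.mod_eq_of_lt h2]
  exact Nat.one_le_iff_ne_zero.mp h1

lemma digList_length (k x y : ℕ) : (digList p k x y).length = k := by simp [digList]

lemma digList_getD (k x y i : ℕ) (hi : i < k) :
    (digList p k x y).getD i (0, 0) = (dig p x i, dig p y i) := by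
  simp [digList, List.getD, List.getElem?_map, List.getElem?_range hi]

lemma digList_mem (hp : 1 < p) (k x y : ℕ) :
    ∀ d ∈ digList p k x y, d.1 < p ∧ d.2 < p := by
  intro d hd
  simp only [digList, List.mem_map, List.mem_range] at hd
  obtain ⟨i, -, rfl⟩ := hd
  exact ⟨dig_lt p hp x i, dig_lt p hp y i⟩

lemma sum_digList_fst (k x y : ℕ) (hx : x < p ^ k) :
    (x : ℤ) = ∑ i ∈ Finset.range (digList p k x y).length,
      (((digList p k x y).getD i (0, 0)).1 : ℤ) * (p : ℤ) ^ i := by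
  rw [digList_length]
  have : ∀ i ∈ Finset.range k,
      (((digList p k x y).getD i (0, 0)).1 : ℤ) * (p : ℤ) ^ i = ((dig p x i * p ^ i : ℕ) : ℤ) := by
    intro i hi
    rw [digList_getD p k x y i (Finset.mem_range.1 hi)]
    push_cast; ring
  rw [Finset.sum_congr rfl this, ← Nat.cast_sum, sum_dig, Nat.mod_eq_of_lt hx]

lemma sum_digList_snd (k x y : ℕ) (hy : y < p ^ k) :
    (y : ℤ) = ∑ i ∈ Finset.range (digList p k x y).length,
      (((digList p k x y).getD i (0, 0)).2 : ℤ) * (p : ℤ) ^ i := by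
  rw [digList_length]
  have : ∀ i ∈ Finset.range k,
      (((digList p k x y).getD i (0, 0)).2 : ℤ) * (p : ℤ) ^ i = ((dig p y i * p ^ i : ℕ) : ℤ) := by
    intro i hi
    rw [digList_getD p k x y i (Finset.mem_range.1 hi)]
    push_cast; ring
  rw [Finset.sum_congr rfl this, ← Nat.cast_sum, sum_dig, Nat.mod_eq_of_lt hy]


def clen (x y : ℕ) : ℕ := max (nlen p x) (nlen p y)

def canon (x y : ℕ) : List (ℕ × ℕ) := digList p (clen p x y) x y

lemma lt_pow_clen_left (hp : 1 < p) (x y : ℕ) : x < p ^ clen p x y :=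
  (lt_pow_nlen p hp x).trans_le (Nat.pow_le_pow_right (by omega) (le_max_left _ _))

lemma lt_pow_clen_right (hp : 1 < p) (x y : ℕ) : y < p ^ clen p x y :=
  (lt_pow_nlen p hp y).trans_le (Nat.pow_le_pow_right (by omega) (le_max_right _ _))

lemma clen_pos (hp : 1 < p) {x y : ℕ} (hxy : x ≠ 0 ∨ y ≠ 0) : 0 < clen p x y := by
  rcases hxy with h | h
  · exact lt_max_of_lt_left (by unfold nlen; rw [if_neg h]; omega)
  · exact lt_max_of_lt_right (by unfold nlen; rw [if_neg h]; omega)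

lemma canon_ne_nil (hp : 1 < p) {x y : ℕ} (hxy : x ≠ 0 ∨ y ≠ 0) : canon p x y ≠ [] := by
  have := clen_pos p hp hxy
  simp only [canon, digList, ne_eq, List.map_eq_nil_iff, List.range_eq_nil]
  omega

lemma canon_getLast (hp : 1 < p) {x y : ℕ} (hxy : x ≠ 0 ∨ y ≠ 0) (h : canon p x y ≠ []) :
    ((canon p x y).getLast h).1 ≠ 0 ∨ ((canon p x y).getLast h).2 ≠ 0 := by
  have hl : (canon p x y).length = clen p x y := digList_length p _ x y
  have hpos : 0 < clen p x y := clen_pos p hp hxy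
  have : (canon p x y).getLast h = (dig p x (clen p x y - 1), dig p y (clen p x y - 1)) := by
    rw [List.getLast_eq_getElem]
    simp only [canon, digList] at *
    rw [List.getElem_map, List.getElem_range]
    congr 1 <;> simp [hl]
  rw [this]
  rcases le_total (nlen p y) (nlen p x) with hc | hc
  · left
    have hx : x ≠ 0 := by
      intro h0; subst h0
      have hy : y ≠ 0 := hxy.resolve_left (by simp)
      have h1 : 1 ≤ nlen p y := by unfold nlen; rw [if_neg hy]; omega
      have h0' : nlen p (0 : ℕ) = 0 := by simp [nlen]
      omega
    have : clen p x y = nlen p x := max_eq_left hc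
    rw [this]
    exact dig_nlen_ne p hp hx
  · right
    have hy : y ≠ 0 := by
      intro h0; subst h0
      have hx : x ≠ 0 := hxy.resolve_right (by simp)
      have h1 : 1 ≤ nlen p x := by unfold nlen; rw [if_neg hx]; omega
      have h0' : nlen p (0 : ℕ) = 0 := by simp [nlen]
      omega
    have : clen p x y = nlen p y := max_eq_right hc
    rw [this]
    exact dig_nlen_ne p hp hy

lemma dig_low (hp : 0 < p) (x r k i : ℕ) (hik : i < k) :
    dig p (x * p ^ k + r) i = dig p r i := by
  unfold dig
  rcases Nat.exists_eq_add_of_lt hik with ⟨j, rfl⟩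
  have h1 : x * p ^ (i + j + 1) + r = r + (x * p ^ j * p) * p ^ i := by ring
  rw [h1, Nat.add_mul_div_right _ _ (Nat.pow_pos hp), Nat.add_mul_mod_self_right]

lemma dig_high (hp : 0 < p) (x r k i : ℕ) (hr : r < p ^ k) :
    dig p (x * p ^ k + r) (k + i) = dig p x i := by
  unfold dig
  rw [pow_add, ← Nat.div_div_eq_div_mul, add_comm (x * p ^ k) r,
    Nat.add_mul_div_right _ _ (Nat.pow_pos hp), Nat.div_eq_of_lt hr, zero_add]

lemma digList_split (hp : 1 < p) (k l x y r s : ℕ) (hr : r < p ^ k) (hs : s < p ^ k) :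
    digList p (k + l) (x * p ^ k + r) (y * p ^ k + s) =
      digList p k r s ++ digList p l x y := by
  unfold digList
  rw [List.range_add, List.map_append, List.map_map]
  congr 1
  · apply List.map_congr_left
    intro i hi
    rw [List.mem_range] at hi
    rw [dig_low p (by omega) x r k i hi, dig_low p (by omega) y s k i hi]
  · apply List.map_congr_left
    intro i hi
    simp only [Function.comp_apply]
    rw [dig_high p (by omega) x r k i hr, dig_high p (by omega) y s k i hs]



lemma getLast_of_eq {α : Type*} {l l' : List α} (h : l = l') {h2 : l ≠ []} :
    l.getLast h2 = l'.getLast (h ▸ h2) := by subst h; rfl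

section Automaton

variable {S : Type} (δ : S → ℕ × ℕ → S) (s0 : S) (ω : S → ZMod p) (V : ℕ × ℕ → ZMod p)

def AutoSpec : Prop :=
  ∀ (m n : ℕ) (L : List (ℕ × ℕ)),
    (∀ d ∈ L, d.1 < p ∧ d.2 < p) →
    (∀ h : L ≠ [], (L.getLast h).1 ≠ 0 ∨ (L.getLast h).2 ≠ 0) →
    (m : ℤ) = ∑ i ∈ Finset.range L.length, ((L.getD i (0, 0)).1 : ℤ) * (p : ℤ) ^ i →
    (n : ℤ) = ∑ i ∈ Finset.range L.length, ((L.getD i (0, 0)).2 : ℤ) * (p : ℤ) ^ i →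
    ω (L.foldl δ s0) = V (m, n)

lemma base_eval (hp : 1 < p) (h : AutoSpec p δ s0 ω V) (r s : ℕ) :
    V (r, s) = ω ((canon p r s).foldl δ s0) := by
  refine (h r s (canon p r s) (digList_mem p hp _ r s) ?_
    (sum_digList_fst p _ r s (lt_pow_clen_left p hp r s))
    (sum_digList_snd p _ r s (lt_pow_clen_right p hp r s))).symm
  intro hne
  have hxy : r ≠ 0 ∨ s ≠ 0 := by
    by_contra hc
    push_neg at hc
    obtain ⟨rfl, rfl⟩ := hc
    exact hne (by simp [canon, clen, nlen, digList])
  exact canon_getLast p hp hxy hne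

lemma key_eval (hp : 1 < p) (h : AutoSpec p δ s0 ω V) {k x y r s : ℕ}
    (hr : r < p ^ k) (hs : s < p ^ k) (hxy : x ≠ 0 ∨ y ≠ 0) :
    V (x * p ^ k + r, y * p ^ k + s) =
      ω ((canon p x y).foldl δ ((digList p k r s).foldl δ s0)) := by
  have hsplit : digList p (k + clen p x y) (x * p ^ k + r) (y * p ^ k + s) =
      digList p k r s ++ canon p x y := digList_split p hp k (clen p x y) x y r s hr hs
  have hxb : x * p ^ k + r < p ^ (k + clen p x y) := by
    have h1 : x + 1 ≤ p ^ clen p x y := lt_pow_clen_left p hp x y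
    have h2 : p ^ (k + clen p x y) = p ^ k * p ^ clen p x y := pow_add p k _
    have h3 : (x + 1) * p ^ k ≤ p ^ clen p x y * p ^ k :=
      Nat.mul_le_mul_right _ h1
    nlinarith [Nat.pow_pos (n := k) (show 0 < p by omega)]
  have hyb : y * p ^ k + s < p ^ (k + clen p x y) := by
    have h1 : y + 1 ≤ p ^ clen p x y := lt_pow_clen_right p hp x y
    have h3 : (y + 1) * p ^ k ≤ p ^ clen p x y * p ^ k :=
      Nat.mul_le_mul_right _ h1
    have h2 : p ^ (k + clen p x y) = p ^ k * p ^ clen p x y := pow_add p k _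
    nlinarith [Nat.pow_pos (n := k) (show 0 < p by omega)]
  rw [← List.foldl_append, ← hsplit]
  refine (h _ _ _ (digList_mem p hp _ _ _) ?_
    (sum_digList_fst p _ _ _ hxb) (sum_digList_snd p _ _ _ hyb)).symm
  intro hne
  rw [getLast_of_eq hsplit,
    List.getLast_append_of_right_ne_nil _ _ (canon_ne_nil p hp hxy)]
  exact canon_getLast p hp hxy _

end Automaton

section Main

variable {S : Type} (δ : S → ℕ × ℕ → S) (s0 : S) (ω : Bool → Bool → S → ZMod p)

/-- offset within the side -/
def tO (i0 i : ℕ) : ℕ := if i < i0 then i0 - 1 - i else i - i0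

/-- reduced residue -/
def redR (M ρ t : ℕ) : ℕ := ρ + t - if M ≤ ρ + t then M else 0

def i0f (m : ℕ) (a : ℤ) : ℕ := min m (-a).toNat

def bOf (m : ℕ) (a : ℤ) (s : Bool) : ℕ :=
  cond s ((-a).toNat - i0f m a + 1) ((a + i0f m a).toNat)

abbrev CodeN (S : Type) : Type :=
  ℕ × ℕ × (Bool → ℕ) × (Bool → ℕ) × (Bool → Bool → Bool → Bool → Option (S → S))

def decodeFun (k M m n : ℕ) (c : CodeN S) : Fin m × Fin n → ZMod p := fun ij =>
  match c.2.2.2.2 (decide ((ij.1 : ℕ) < c.1)) (decide ((ij.2 : ℕ) < c.2.1))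
      (decide (M ≤ c.2.2.1 (decide ((ij.1 : ℕ) < c.1)) + tO c.1 (ij.1 : ℕ)))
      (decide (M ≤ c.2.2.2.1 (decide ((ij.2 : ℕ) < c.2.1)) + tO c.2.1 (ij.2 : ℕ))) with
  | none => ω (decide ((ij.1 : ℕ) < c.1)) (decide ((ij.2 : ℕ) < c.2.1))
      ((canon p (redR M (c.2.2.1 (decide ((ij.1 : ℕ) < c.1))) (tO c.1 (ij.1 : ℕ)))
                (redR M (c.2.2.2.1 (decide ((ij.2 : ℕ) < c.2.1))) (tO c.2.1 (ij.2 : ℕ)))).foldl δ s0)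
  | some g => ω (decide ((ij.1 : ℕ) < c.1)) (decide ((ij.2 : ℕ) < c.2.1))
      (g ((digList p k (redR M (c.2.2.1 (decide ((ij.1 : ℕ) < c.1))) (tO c.1 (ij.1 : ℕ)))
                       (redR M (c.2.2.2.1 (decide ((ij.2 : ℕ) < c.2.1))) (tO c.2.1 (ij.2 : ℕ)))).foldl δ s0))

def encode (k M m n : ℕ) (a b : ℤ) : CodeN S :=
  (i0f m a, i0f n b, fun s => bOf m a s % M, fun s => bOf n b s % M,
   fun sx sy ex ey =>
     if bOf m a sx / M + (cond ex 1 0) = 0 ∧ bOf n b sy / M + (cond ey 1 0) = 0 then none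
     else some fun st =>
       (canon p (bOf m a sx / M + cond ex 1 0) (bOf n b sy / M + cond ey 1 0)).foldl δ st)

lemma coord (m M : ℕ) (hmM : m ≤ M) (a : ℤ) (i : ℕ) (hi : i < m) :
    tO (i0f m a) i < M ∧
    (a + i : ℤ) = cond (decide (i < i0f m a))
        (-((bOf m a (decide (i < i0f m a)) + tO (i0f m a) i : ℕ) : ℤ))
        ((bOf m a (decide (i < i0f m a)) + tO (i0f m a) i : ℕ) : ℤ) := by
  by_cases h : i < i0f m a
  · rw [decide_eq_true h]
    simp only [cond_true, bOf]
    unfold tO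
    rw [if_pos h]
    unfold i0f at h ⊢
    exact ⟨by omega, by omega⟩
  · rw [decide_eq_false h]
    simp only [cond_false, bOf]
    unfold tO
    rw [if_neg h]
    unfold i0f at h ⊢
    exact ⟨by omega, by omega⟩

lemma redR_spec (M B t : ℕ) (hM : 0 < M) (ht : t < M) :
    (B / M + (if M ≤ B % M + t then 1 else 0)) * M + redR M (B % M) t = B + t ∧
      redR M (B % M) t < M := by
  unfold redR
  have h2 : B / M * M + B % M = B := by rw [Nat.mul_comm]; exact Nat.div_add_mod B M
  have h3 : B % M < M := Nat.mod_lt _ hM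
  split_ifs with h
  · rw [add_mul, one_mul]
    constructor
    · generalize B / M * M = Q at h2 ⊢; omega
    · omega
  · rw [add_zero]
    constructor
    · generalize B / M * M = Q at h2 ⊢; omega
    · omega


lemma decode_encode (hp1 : 1 < p) (k M m n : ℕ) (hM : M = p ^ k) (hmM : m ≤ M) (hnM : n ≤ M)
    (U : ℤ × ℤ → ZMod p)
    (hA : ∀ sx sy : Bool, AutoSpec p δ s0 (ω sx sy)
      (fun mn : ℕ × ℕ => U (cond sx (-(mn.1 : ℤ)) (mn.1 : ℤ), cond sy (-(mn.2 : ℤ)) (mn.2 : ℤ))))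
    (a b : ℤ) :
    (fun ij : Fin m × Fin n => U (a + (ij.1 : ℤ), b + (ij.2 : ℤ))) =
      decodeFun p δ s0 ω k M m n (encode p δ k M m n a b) := by
  have hM0 : 0 < M := hM ▸ Nat.pow_pos (by omega)
  funext ij
  obtain ⟨i, j⟩ := ij
  obtain ⟨htx, hax⟩ := coord m M hmM a i i.isLt
  obtain ⟨hty, hby⟩ := coord n M hnM b j j.isLt
  dsimp only [decodeFun, encode]
  simp only [Bool.cond_decide]
  set sx : Bool := decide ((i : ℕ) < i0f m a) with hsx
  set sy : Bool := decide ((j : ℕ) < i0f n b) with hsy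
  set tx := tO (i0f m a) (i : ℕ) with htxd
  set ty := tO (i0f n b) (j : ℕ) with htyd
  set Bx := bOf m a sx with hBx
  set By := bOf n b sy with hBy
  obtain ⟨hqxe, hrx⟩ := redR_spec M Bx tx hM0 htx
  obtain ⟨hqye, hry⟩ := redR_spec M By ty hM0 hty
  set rx := redR M (Bx % M) tx with hrxd
  set ry := redR M (By % M) ty with hryd
  set qx := Bx / M + (if M ≤ Bx % M + tx then 1 else 0) with hqxd
  set qy := By / M + (if M ≤ By % M + ty then 1 else 0) with hqyd
  have hUeq : U (a + (i : ℤ), b + (j : ℤ)) =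
      U (cond sx (-((qx * M + rx : ℕ) : ℤ)) ((qx * M + rx : ℕ) : ℤ),
         cond sy (-((qy * M + ry : ℕ) : ℤ)) ((qy * M + ry : ℕ) : ℤ)) := by
    rw [hax, hby, ← hqxe, ← hqye]
  by_cases hq0 : qx = 0 ∧ qy = 0
  · rw [if_pos hq0]
    have h1 : U (a + (i : ℤ), b + (j : ℤ)) =
        (fun mn : ℕ × ℕ => U (cond sx (-(mn.1 : ℤ)) (mn.1 : ℤ),
          cond sy (-(mn.2 : ℤ)) (mn.2 : ℤ))) (rx, ry) := by
      rw [hUeq, hq0.1, hq0.2]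
      norm_num
    exact h1.trans (base_eval p δ s0 (ω sx sy) _ hp1 (hA sx sy) rx ry)
  · rw [if_neg hq0]
    have hxy : qx ≠ 0 ∨ qy ≠ 0 := by tauto
    have h1 : U (a + (i : ℤ), b + (j : ℤ)) =
        (fun mn : ℕ × ℕ => U (cond sx (-(mn.1 : ℤ)) (mn.1 : ℤ),
          cond sy (-(mn.2 : ℤ)) (mn.2 : ℤ))) (qx * p ^ k + rx, qy * p ^ k + ry) := by
      rw [hUeq, ← hM]
    exact h1.trans (key_eval p δ s0 (ω sx sy) _ hp1 (hA sx sy) (hM ▸ hrx) (hM ▸ hry) hxy)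

end Main

lemma foldl_pair {A B C : Type*} (f : A → C → A) (g : B → C → B) (L : List C) (ab : A × B) :
    L.foldl (fun s d => (f s.1 d, g s.2 d)) ab = (L.foldl f ab.1, L.foldl g ab.2) := by
  induction L generalizing ab with
  | nil => rfl
  | cons c L ih => simp only [List.foldl_cons, ih]

lemma autoSpec_fst {S1 S2 : Type} (δ1 : S1 → ℕ × ℕ → S1) (δ2 : S2 → ℕ × ℕ → S2)
    (s1 : S1) (s2 : S2) (ω1 : S1 → ZMod p) (V1 : ℕ × ℕ → ZMod p)
    (h : AutoSpec p δ1 s1 ω1 V1) :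
    AutoSpec p (fun (s : S1 × S2) d => (δ1 s.1 d, δ2 s.2 d)) (s1, s2)
      (fun s => ω1 s.1) V1 := by
  intro m n L h1 h2 h3 h4
  rw [foldl_pair]
  exact h m n L h1 h2 h3 h4

lemma autoSpec_snd {S1 S2 : Type} (δ1 : S1 → ℕ × ℕ → S1) (δ2 : S2 → ℕ × ℕ → S2)
    (s1 : S1) (s2 : S2) (ω2 : S2 → ZMod p) (V2 : ℕ × ℕ → ZMod p)
    (h : AutoSpec p δ2 s2 ω2 V2) :
    AutoSpec p (fun (s : S1 × S2) d => (δ1 s.1 d, δ2 s.2 d)) (s1, s2)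
      (fun s => ω2 s.2) V2 := by
  intro m n L h1 h2 h3 h4
  rw [foldl_pair]
  exact h m n L h1 h2 h3 h4

end NNAux



/-- `U : ℕ × ℕ → F_p` is `[p,p]`-automatic: a DFAO computes `U (m,n)` from the base-`p`
representations of `m` and `n`, padded to equal length (no common leading zero pair) and
read least significant digit first. -/
def IsPPAutomatic (p : ℕ) (U : ℕ × ℕ → ZMod p) : Prop :=
  ∃ (S : Type) (_ : Fintype S) (δ : S → ℕ × ℕ → S) (s0 : S) (ω : S → ZMod p),
    ∀ (m n : ℕ) (L : List (ℕ × ℕ)),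
      (∀ d ∈ L, d.1 < p ∧ d.2 < p) →
      (∀ h : L ≠ [], (L.getLast h).1 ≠ 0 ∨ (L.getLast h).2 ≠ 0) →
      (m : ℤ) = ∑ i ∈ Finset.range L.length, ((L.getD i (0, 0)).1 : ℤ) * (p : ℤ) ^ i →
      (n : ℤ) = ∑ i ∈ Finset.range L.length, ((L.getD i (0, 0)).2 : ℤ) * (p : ℤ) ^ i →
      ω (L.foldl δ s0) = U (m, n)

/-- `U : ℤ × ℤ → F_p` is `[-p,-p]`-automatic: each of the four quadrant restrictions
`U|_{(±ℕ)×(±ℕ)}` (reflected back to `ℕ × ℕ`) is `[p,p]`-automatic. -/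
def IsNegNegAutomatic (p : ℕ) (U : ℤ × ℤ → ZMod p) : Prop :=
  IsPPAutomatic p (fun mn : ℕ × ℕ => U ((mn.1 : ℤ), (mn.2 : ℤ))) ∧
  IsPPAutomatic p (fun mn : ℕ × ℕ => U (-(mn.1 : ℤ), (mn.2 : ℤ))) ∧
  IsPPAutomatic p (fun mn : ℕ × ℕ => U ((mn.1 : ℤ), -(mn.2 : ℤ))) ∧
  IsPPAutomatic p (fun mn : ℕ × ℕ => U (-(mn.1 : ℤ), -(mn.2 : ℤ)))

/-- If `U ∈ F_p^{ℤ×ℤ}` is `[-p,-p]`-automatic, then there is a constant `K` such that the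
number of distinct `m × n` rectangular subwords of `U` is at most `K · max{m,n}^{10}` for
all `m, n ≥ 1`. -/

theorem negNegAutomatic_complexity (p : ℕ) (hp : p.Prime) (U : ℤ × ℤ → ZMod p)
    (hU : IsNegNegAutomatic p U) :
    ∃ K : ℕ, ∀ m n : ℕ, 1 ≤ m → 1 ≤ n →
      (Set.range (fun ab : ℤ × ℤ => fun ij : Fin m × Fin n =>
        U (ab.1 + (ij.1 : ℤ), ab.2 + (ij.2 : ℤ)))).ncard ≤ K * max m n ^ 10 := by
  classical
  have hp1 : 1 < p := hp.one_lt
  obtain ⟨⟨S1, F1, δ1, t1, ω1, h1⟩, ⟨S2, F2, δ2, t2, ω2, h2⟩,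
    ⟨S3, F3, δ3, t3, ω3, h3⟩, ⟨S4, F4, δ4, t4, ω4, h4⟩⟩ := hU
  letI := F1; letI := F2; letI := F3; letI := F4
  letI : DecidableEq (S1 × S2 × S3 × S4) := Classical.decEq _
  letI : Fintype (S1 × S2 × S3 × S4 → S1 × S2 × S3 × S4) := inferInstance
  have h1' : NNAux.AutoSpec p δ1 t1 ω1
      (fun mn : ℕ × ℕ => U ((mn.1 : ℤ), (mn.2 : ℤ))) := h1
  have h2' : NNAux.AutoSpec p δ2 t2 ω2
      (fun mn : ℕ × ℕ => U (-(mn.1 : ℤ), (mn.2 : ℤ))) := h2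
  have h3' : NNAux.AutoSpec p δ3 t3 ω3
      (fun mn : ℕ × ℕ => U ((mn.1 : ℤ), -(mn.2 : ℤ))) := h3
  have h4' : NNAux.AutoSpec p δ4 t4 ω4
      (fun mn : ℕ × ℕ => U (-(mn.1 : ℤ), -(mn.2 : ℤ))) := h4
  let δ34 : S3 × S4 → ℕ × ℕ → S3 × S4 := fun s d => (δ3 s.1 d, δ4 s.2 d)
  let δ234 : S2 × S3 × S4 → ℕ × ℕ → S2 × S3 × S4 := fun s d => (δ2 s.1 d, δ34 s.2 d)
  let δ : S1 × S2 × S3 × S4 → ℕ × ℕ → S1 × S2 × S3 × S4 :=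
    fun s d => (δ1 s.1 d, δ234 s.2 d)
  let s0 : S1 × S2 × S3 × S4 := (t1, t2, t3, t4)
  let ω : Bool → Bool → S1 × S2 × S3 × S4 → ZMod p := fun sx sy =>
    match sx, sy with
    | false, false => fun s => ω1 s.1
    | true,  false => fun s => ω2 s.2.1
    | false, true  => fun s => ω3 s.2.2.1
    | true,  true  => fun s => ω4 s.2.2.2
  have hA : ∀ sx sy : Bool, NNAux.AutoSpec p δ s0 (ω sx sy)
      (fun mn : ℕ × ℕ =>
        U (cond sx (-(mn.1 : ℤ)) (mn.1 : ℤ), cond sy (-(mn.2 : ℤ)) (mn.2 : ℤ))) := by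
    intro sx sy
    cases sx <;> cases sy
    · exact NNAux.autoSpec_fst p δ1 δ234 t1 (t2, t3, t4) ω1 _ h1'
    · exact NNAux.autoSpec_snd p δ1 δ234 t1 (t2, t3, t4) _ _
        (NNAux.autoSpec_snd p δ2 δ34 t2 (t3, t4) _ _
          (NNAux.autoSpec_fst p δ3 δ4 t3 t4 ω3 _ h3'))
    · exact NNAux.autoSpec_snd p δ1 δ234 t1 (t2, t3, t4) _ _
        (NNAux.autoSpec_fst p δ2 δ34 t2 (t3, t4) ω2 _ h2')
    · exact NNAux.autoSpec_snd p δ1 δ234 t1 (t2, t3, t4) _ _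
        (NNAux.autoSpec_snd p δ2 δ34 t2 (t3, t4) _ _
          (NNAux.autoSpec_snd p δ3 δ4 t3 t4 ω4 _ h4'))
  set C0 : ℕ := Fintype.card
    (Bool → Bool → Bool → Bool → Option (S1 × S2 × S3 × S4 → S1 × S2 × S3 × S4)) with hC0
  refine ⟨4 * p ^ 4 * C0, ?_⟩
  intro m n hm hn
  set mx := max m n with hmx
  have hmx1 : 1 ≤ mx := le_trans hm (le_max_left m n)
  set k := Nat.clog p mx with hk
  set M := p ^ k with hMdef
  have hM0 : 0 < M := Nat.pow_pos (by omega)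
  have hmM : m ≤ M := le_trans (le_max_left m n) (Nat.le_pow_clog hp1 mx)
  have hnM : n ≤ M := le_trans (le_max_right m n) (Nat.le_pow_clog hp1 mx)
  have hMmx : M ≤ p * mx := by
    rcases eq_or_lt_of_le hmx1 with h1 | h1
    · rw [hMdef, hk, ← h1, Nat.clog_one_right]
      simpa using hp1.le
    · have hlt : p ^ (k - 1) < mx := by
        rw [hk]; exact Nat.pow_pred_clog_lt_self hp1 h1
      calc M = p * p ^ (k - 1) := by
              rw [hMdef, ← pow_succ']; congr 1
              have : 0 < k := hk ▸ Nat.clog_pos hp1 h1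
              omega
        _ ≤ p * mx := Nat.mul_le_mul_left _ hlt.le
  let ι : (Fin (m + 1) × Fin (n + 1) × (Bool → Fin M) × (Bool → Fin M) ×
        (Bool → Bool → Bool → Bool → Option (S1 × S2 × S3 × S4 → S1 × S2 × S3 × S4))) →
      NNAux.CodeN (S1 × S2 × S3 × S4) := fun c =>
    (c.1, c.2.1, fun s => (c.2.2.1 s : ℕ), fun s => (c.2.2.2.1 s : ℕ), c.2.2.2.2)
  let eF : ℤ × ℤ → (Fin (m + 1) × Fin (n + 1) × (Bool → Fin M) × (Bool → Fin M) ×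
      (Bool → Bool → Bool → Bool → Option (S1 × S2 × S3 × S4 → S1 × S2 × S3 × S4))) := fun ab =>
    (⟨NNAux.i0f m ab.1, Nat.lt_succ_of_le (min_le_left _ _)⟩,
     ⟨NNAux.i0f n ab.2, Nat.lt_succ_of_le (min_le_left _ _)⟩,
     fun s => ⟨NNAux.bOf m ab.1 s % M, Nat.mod_lt _ hM0⟩,
     fun s => ⟨NNAux.bOf n ab.2 s % M, Nat.mod_lt _ hM0⟩,
     fun sx sy ex ey =>
       if NNAux.bOf m ab.1 sx / M + (cond ex 1 0) = 0 ∧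
          NNAux.bOf n ab.2 sy / M + (cond ey 1 0) = 0 then none
       else some fun st => (NNAux.canon p (NNAux.bOf m ab.1 sx / M + cond ex 1 0)
         (NNAux.bOf n ab.2 sy / M + cond ey 1 0)).foldl δ st)
  have hfac : ∀ ab : ℤ × ℤ, ι (eF ab) = NNAux.encode p δ k M m n ab.1 ab.2 := fun ab => rfl
  have hblock : ∀ ab : ℤ × ℤ,
      (fun ij : Fin m × Fin n => U (ab.1 + (ij.1 : ℤ), ab.2 + (ij.2 : ℤ))) =
        (NNAux.decodeFun p δ s0 ω k M m n ∘ ι) (eF ab) := by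
    intro ab
    rw [Function.comp_apply, hfac ab]
    exact NNAux.decode_encode p δ s0 ω hp1 k M m n hMdef hmM hnM U hA ab.1 ab.2
  have hsub : Set.range (fun ab : ℤ × ℤ => fun ij : Fin m × Fin n =>
      U (ab.1 + (ij.1 : ℤ), ab.2 + (ij.2 : ℤ))) ⊆
      Set.range (NNAux.decodeFun p δ s0 ω k M m n ∘ ι) := by
    rintro _ ⟨ab, rfl⟩
    exact ⟨eF ab, (hblock ab).symm⟩
  have hle1 := Set.ncard_le_ncard hsub (Set.finite_range _)
  have hle2 : (Set.range (NNAux.decodeFun p δ s0 ω k M m n ∘ ι)).ncard ≤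
      (m + 1) * ((n + 1) * (M ^ 2 * (M ^ 2 * C0))) := by
    rw [← Set.image_univ]
    refine le_trans (Set.ncard_image_le Set.finite_univ) (le_of_eq ?_)
    rw [Set.ncard_univ, Nat.card_eq_fintype_card]
    simp only [Fintype.card_prod, Fintype.card_fun, Fintype.card_fin, Fintype.card_bool, hC0]
  calc (Set.range (fun ab : ℤ × ℤ => fun ij : Fin m × Fin n =>
        U (ab.1 + (ij.1 : ℤ), ab.2 + (ij.2 : ℤ)))).ncard
      ≤ (m + 1) * ((n + 1) * (M ^ 2 * (M ^ 2 * C0))) := le_trans hle1 hle2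
    _ ≤ (2 * mx) * ((2 * mx) * ((p * mx) ^ 2 * ((p * mx) ^ 2 * C0))) := by
        gcongr <;> omega
    _ = (4 * p ^ 4 * C0) * mx ^ 6 := by ring
    _ ≤ (4 * p ^ 4 * C0) * mx ^ 10 :=
        Nat.mul_le_mul_left _ (Nat.pow_le_pow_right hmx1 (by norm_num))
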